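/- For every z ∈ ℤ^d with z ≠ 0 there exists R < ∞ (depending on d and z) such that for every r ≥ R and every real x ≥ 0: P(T_{C(z,r)}(0,z) > 9‖z‖x) ≤ 9^{2d} · ‖z‖ · P(Y > x). -/

import Mathlib

open MeasureTheory ProbabilityTheory Filter ENNReal

noncomputable section

namespace FPP

/-- Vertices of the `d`-dimensional integer lattice. -/
abbrev V (d : ℕ) := Fin d → ℤ

/-- ℓ¹-distance on the lattice. -/
def dist1 {d : ℕ} (x y : V d) : ℕ := ∑ i, (x i - y i).natAbs

/-- ℓ¹-norm on the lattice. -/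
def norm1 {d : ℕ} (x : V d) : ℕ := ∑ i, (x i).natAbs

lemma dist1_symm {d : ℕ} (x y : V d) : dist1 x y = dist1 y x :=
  Finset.sum_congr rfl fun i _ => by omega

/-- The set of nearest-neighbour edges of the lattice, as unordered pairs of vertices. -/
def EdgeSet (d : ℕ) : Set (Sym2 (V d)) :=
  Sym2.fromRel (r := fun x y => dist1 x y = 1) ⟨fun _ _ h => by rwa [dist1_symm]⟩

/-- A lattice path: consecutive vertices are at ℓ¹-distance one. -/
def IsLatticePath {d : ℕ} (p : List (V d)) : Prop :=
  p.Chain' fun a b => dist1 a b = 1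

variable {d : ℕ} {Ω : Type*}

/-- The total weight of a path: the sum of the passage times of its edges. -/
def pathWeight (τ : Sym2 (V d) → Ω → ℝ) (ω : Ω) (p : List (V d)) : ℝ :=
  ((p.zip p.tail).map fun q => τ s(q.1, q.2) ω).sum

/-- The travel time between two vertices. -/
def T (τ : Sym2 (V d) → Ω → ℝ) (ω : Ω) (y z : V d) : ℝ :=
  sInf {c | ∃ p : List (V d), IsLatticePath p ∧ p.head? = some y ∧
    p.getLast? = some z ∧ pathWeight τ ω p = c}

/-- The travel time between two vertex sets (infimum over lattice paths from `A` to `B`). -/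
def TSet (τ : Sym2 (V d) → Ω → ℝ) (ω : Ω) (A B : Set (V d)) : ℝ :=
  sInf {c | ∃ p : List (V d), IsLatticePath p ∧ (∃ a ∈ A, p.head? = some a) ∧
    (∃ b ∈ B, p.getLast? = some b) ∧ pathWeight τ ω p = c}

/-- Point-to-set travel time `inf {T(y,z) : z ∈ A}`. -/
def TtoSet (τ : Sym2 (V d) → Ω → ℝ) (ω : Ω) (y : V d) (A : Set (V d)) : ℝ :=
  sInf {c | ∃ z ∈ A, T τ ω y z = c}

/-- The travel time between `A` and `B` restricted to paths all of whose vertices lie in `S`. -/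
def Tres (τ : Sym2 (V d) → Ω → ℝ) (ω : Ω) (S A B : Set (V d)) : ℝ :=
  sInf {c | ∃ p : List (V d), IsLatticePath p ∧ (∀ v ∈ p, v ∈ S) ∧
    (∃ a ∈ A, p.head? = some a) ∧ (∃ b ∈ B, p.getLast? = some b) ∧ pathWeight τ ω p = c}

/-- The standard basis vectors of the lattice. -/
def stdBasis (d : ℕ) (i : Fin d) : V d := fun j => if j = i then 1 else 0

/-- The minimum passage time among the `2d` edges incident to the origin. -/
def Ymin (τ : Sym2 (V d) → Ω → ℝ) (ω : Ω) : ℝ :=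
  sInf {x | ∃ i : Fin d, x = τ s(0, stdBasis d i) ω ∨ x = τ s(0, -stdBasis d i) ω}

/-- The passage times are measurable, nonnegative, independent and identically distributed. -/
def IID [MeasurableSpace Ω] (τ : Sym2 (V d) → Ω → ℝ) (P : Measure Ω) : Prop :=
  (∀ e, Measurable (τ e)) ∧ (∀ e ω, 0 ≤ τ e ω) ∧
    iIndepFun (fun e : EdgeSet d => τ e.1) P ∧
    ∀ e e' : EdgeSet d, IdentDistrib (τ e.1) (τ e'.1) P P

/-- `μZ` is the time constant: it is nonnegative and `T(0,nz)/n → μZ z` in probability. -/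
def IsTimeConstant [MeasurableSpace Ω] (τ : Sym2 (V d) → Ω → ℝ) (P : Measure Ω)
    (μZ : V d → ℝ) : Prop :=
  (∀ z, 0 ≤ μZ z) ∧
    ∀ z : V d, TendstoInMeasure P (fun (n : ℕ) ω => T τ ω 0 (n • z) / n) atTop fun _ => μZ z

/-- `E[Y^α]`, as a Lebesgue integral with values in `[0,∞]`. -/
def momY [MeasurableSpace Ω] (τ : Sym2 (V d) → Ω → ℝ) (P : Measure Ω) (α : ℝ) : ℝ≥0∞ :=
  ∫⁻ ω, ENNReal.ofReal (Ymin τ ω ^ α) ∂P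

/-- Embedding of the lattice into Euclidean space. -/
def toE {d : ℕ} (x : V d) : EuclideanSpace ℝ (Fin d) := WithLp.toLp 2 (fun i => (x i : ℝ))

/-- The cylinder of Euclidean radius `r` around the line `ℝz`. -/
def cyl (z : V d) (r : ℝ) : Set (V d) :=
  {y | Metric.infDist (toE y) (Set.range fun a : ℝ => a • toE z) ≤ r}

/-- The hyperplane of vertices with coordinate sum `k`. -/
def Hplane (d : ℕ) (k : ℤ) : Set (V d) := {y | ∑ i, y i = k}

/-- The section `V_n(z,r)` of the cylinder. -/
def Vsec (z : V d) (r : ℝ) (n : ℕ) : Set (V d) := cyl z r ∩ Hplane d (n * norm1 z)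

/-- The set of edges `E_n(z,r)` joining `C(z,r) ∩ H_{n‖z‖-1}` to `C(z,r) ∩ H_{n‖z‖}`. -/
def Esec (z : V d) (r : ℝ) (n : ℕ) : Set (Sym2 (V d)) :=
  {e | ∃ a b : V d, e = s(a, b) ∧ dist1 a b = 1 ∧ a ∈ cyl z r ∧ b ∈ cyl z r ∧
    (∑ i, a i) = (n * norm1 z : ℕ) - 1 ∧ (∑ i, b i) = (n * norm1 z : ℕ)}

/-- The event `A_n(z,r)`: all edges of `E_n(z,r)` have passage time at most `tbar`. -/
def Asec (τ : Sym2 (V d) → Ω → ℝ) (z : V d) (r tbar : ℝ) (n : ℕ) (ω : Ω) : Prop :=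
  ∀ e ∈ Esec z r n, τ e ω ≤ tbar

/-- The regeneration times `ρ_j(z,r)`. -/
def rho (τ : Sym2 (V d) → Ω → ℝ) (z : V d) (r tbar : ℝ) (ω : Ω) : ℕ → ℕ
  | 0 => 0
  | j + 1 => sInf {n : ℕ | rho τ z r tbar ω j < n ∧ Asec τ z r tbar n ω}

/-- The cylinder time constant `μ_{C(z,r)} = lim E[T_{C(z,r)}(V_0,V_n)]/n`, in `[0,∞]`. -/
def muCyl [MeasurableSpace Ω] (τ : Sym2 (V d) → Ω → ℝ) (P : Measure Ω) (z : V d) (r : ℝ) :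
    ℝ≥0∞ :=
  atTop.liminf fun n : ℕ =>
    (∫⁻ ω, ENNReal.ofReal (Tres τ ω (cyl z r) (Vsec z r 0) (Vsec z r n)) ∂P) / n

/-- The set `Z_ε` of sites experiencing a linear order deviation. -/
def Zset (τ : Sym2 (V d) → Ω → ℝ) (μZ : V d → ℝ) (ε : ℝ) (ω : Ω) : Set (V d) :=
  {z | ε * norm1 z < |T τ ω 0 z - μZ z|}

/-- The ball `B_t` of sites reached from the origin by time `t`. -/
def Bt (τ : Sym2 (V d) → Ω → ℝ) (ω : Ω) (t : ℝ) : Set (V d) := {z | T τ ω 0 z ≤ t}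

/-- The discrete ball `B^μ_t` of the time constant. -/
def Bmu (μZ : V d → ℝ) (t : ℝ) : Set (V d) := {z | μZ z ≤ t}

/-- The set `T_ε` of times at which one of the shape theorem inclusions fails. -/
def TEps (τ : Sym2 (V d) → Ω → ℝ) (μZ : V d → ℝ) (ε : ℝ) (ω : Ω) : Set ℝ :=
  {t | 0 ≤ t ∧ (¬ Bmu μZ ((1 - ε) * t) ⊆ Bt τ ω t ∨ ¬ Bt τ ω t ⊆ Bmu μZ ((1 + ε) * t))}

end FPP


namespace FPP

variable {d : ℕ} {Ω : Type*}

-- ### basics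
lemma dist1_eq_norm1 (x y : V d) : dist1 x y = norm1 (x - y) := rfl

lemma norm1_neg (x : V d) : norm1 (-x) = norm1 x :=
  Finset.sum_congr rfl fun i _ => by simp only [Pi.neg_apply, Int.natAbs_neg]

lemma norm1_eq_zero {x : V d} : norm1 x = 0 ↔ x = 0 := by
  constructor
  · intro h; funext i
    have := Finset.sum_eq_zero_iff.mp h i (Finset.mem_univ i)
    simpa [Int.natAbs_eq_zero] using this
  · rintro rfl; simp [norm1]

lemma norm1_add_le (x y : V d) : norm1 (x + y) ≤ norm1 x + norm1 y := by
  rw [norm1, norm1, norm1, ← Finset.sum_add_distrib]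
  exact Finset.sum_le_sum fun i _ => by simpa using (x i).natAbs_add_le (y i)

lemma norm1_smul (c : ℤ) (x : V d) : norm1 (c • x) = c.natAbs * norm1 x := by
  rw [norm1, norm1, Finset.mul_sum]
  exact Finset.sum_congr rfl fun i _ => by simp [Int.natAbs_mul]

def unitVec (d : ℕ) (i : Fin d) (b : Bool) : V d := (if b then 1 else -1 : ℤ) • stdBasis d i

lemma unitVec_apply (i : Fin d) (b : Bool) (j : Fin d) :
    unitVec d i b j = if j = i then (if b then 1 else -1) else 0 := by
  simp only [unitVec, Pi.smul_apply, stdBasis, smul_eq_mul]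
  split <;> simp

lemma norm1_stdBasis (i : Fin d) : norm1 (stdBasis d i) = 1 := by
  rw [norm1]
  rw [Finset.sum_eq_single i]
  · simp [stdBasis]
  · intro b _ hb; simp [stdBasis, hb]
  · intro h; exact absurd (Finset.mem_univ i) h

lemma norm1_unitVec (i : Fin d) (b : Bool) : norm1 (unitVec d i b) = 1 := by
  rw [unitVec, norm1_smul, norm1_stdBasis]; cases b <;> simp

lemma unitVec_injective : Function.Injective (fun p : Fin d × Bool => unitVec d p.1 p.2) := by
  rintro ⟨i, b⟩ ⟨i', b'⟩ h
  simp only at h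
  have hi : i = i' := by
    by_contra hne
    have := congrFun h i
    rw [unitVec_apply, unitVec_apply] at this
    simp [Ne.symm hne] at this
    cases b <;> simp_all
  subst hi
  have := congrFun h i
  rw [unitVec_apply, unitVec_apply] at this
  simp at this
  cases b <;> cases b' <;> simp_all

lemma unitVec_ne_zero (i : Fin d) (b : Bool) : unitVec d i b ≠ 0 := by
  intro h
  have := congrFun h i
  rw [unitVec_apply] at this
  cases b <;> simp_all


/-- The list of edges of a path. -/
def edgesOf (p : List (V d)) : List (Sym2 (V d)) := (p.zip p.tail).map fun q => s(q.1, q.2)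

lemma pathWeight_eq (τ : Sym2 (V d) → Ω → ℝ) (ω : Ω) (p : List (V d)) :
    pathWeight τ ω p = ((edgesOf p).map fun e => τ e ω).sum := by
  simp [pathWeight, edgesOf, List.map_map, Function.comp_def]

/-- Sum of the two endpoints of an edge. -/
def esum : Sym2 (V d) → V d := Sym2.lift ⟨fun a b => a + b, fun a b => add_comm a b⟩

@[simp] lemma esum_mk (a b : V d) : esum s(a, b) = a + b := rfl

/-- Vertex from offsets. -/
def mkv (u ε δ : V d) (c : ℤ × ℤ) : V d := u + c.1 • ε + c.2 • δ

def opath (u ε δ : V d) (L : List (ℤ × ℤ)) : List (V d) := L.map (mkv u ε δ)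

def offDirect : List (ℤ × ℤ) := [(0,0),(1,0)]
def offDet : List (ℤ × ℤ) := [(0,0),(0,1),(1,1),(1,0)]
def offLong : List (ℤ × ℤ) :=
  [(0,0),(-1,0),(-1,1),(-1,2),(0,2),(1,2),(2,2),(2,1),(2,0),(1,0)]

def edgeSums (L : List (ℤ × ℤ)) : List (ℤ × ℤ) :=
  (L.zip L.tail).map fun q => (q.1.1 + q.2.1, q.1.2 + q.2.2)

lemma esum_mem_opath {u ε δ : V d} {L : List (ℤ × ℤ)} {e : Sym2 (V d)}
    (he : e ∈ edgesOf (opath u ε δ L)) :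
    ∃ c ∈ edgeSums L, esum e = (2 : ℤ) • u + c.1 • ε + c.2 • δ := by
  rw [edgesOf, List.mem_map] at he
  obtain ⟨⟨a, b⟩, hab, rfl⟩ := he
  rw [opath, ← List.map_tail, List.zip_map] at hab
  rw [List.mem_map] at hab
  obtain ⟨⟨c1, c2⟩, hc, hq⟩ := hab
  refine ⟨(c1.1 + c2.1, c1.2 + c2.2), List.mem_map.mpr ⟨(c1, c2), hc, rfl⟩, ?_⟩
  obtain ⟨ha, hb⟩ := Prod.mk.injEq .. ▸ hq
  simp only [← ha, ← hb, Prod.map_apply, esum_mk, mkv]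
  module


-- ### lattice path lemmas for offset paths

lemma dist1_mkv {u ε δ : V d} (hε : norm1 ε = 1) (hδ : norm1 δ = 1) {c c' : ℤ × ℤ}
    (h : (c.1 = c'.1 ∧ (c.2 - c'.2).natAbs = 1) ∨ (c.2 = c'.2 ∧ (c.1 - c'.1).natAbs = 1)) :
    dist1 (mkv u ε δ c) (mkv u ε δ c') = 1 := by
  have hdiff : mkv u ε δ c - mkv u ε δ c' = (c.1 - c'.1) • ε + (c.2 - c'.2) • δ := by
    simp only [mkv]; module
  rw [dist1_eq_norm1, hdiff]
  rcases h with ⟨h1, h2⟩ | ⟨h1, h2⟩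
  · rw [h1, sub_self, zero_smul, zero_add, norm1_smul, h2, hδ]
  · rw [h1, sub_self, zero_smul, add_zero, norm1_smul, h2, hε]

lemma isLatticePath_opath {u ε δ : V d} (hε : norm1 ε = 1) (hδ : norm1 δ = 1)
    {L : List (ℤ × ℤ)}
    (hL : L.Chain' fun c c' =>
      (c.1 = c'.1 ∧ (c.2 - c'.2).natAbs = 1) ∨ (c.2 = c'.2 ∧ (c.1 - c'.1).natAbs = 1)) :
    IsLatticePath (opath u ε δ L) := by
  rw [IsLatticePath, List.Chain', opath, List.isChain_map]
  exact List.IsChain.imp (fun a b h => dist1_mkv hε hδ h) hL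

lemma mkv_zero (u ε δ : V d) : mkv u ε δ (0, 0) = u := by simp [mkv]

lemma mkv_onezero (u ε δ : V d) : mkv u ε δ (1, 0) = u + ε := by simp [mkv]

lemma norm1_mkv_le {u ε δ : V d} (hε : norm1 ε = 1) (hδ : norm1 δ = 1) {c : ℤ × ℤ}
    (h1 : c.1.natAbs ≤ 2) (h2 : c.2.natAbs ≤ 2) :
    norm1 (mkv u ε δ c) ≤ norm1 u + 4 := by
  calc norm1 (u + c.1 • ε + c.2 • δ)
      ≤ norm1 (u + c.1 • ε) + norm1 (c.2 • δ) := norm1_add_le _ _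
    _ ≤ norm1 u + norm1 (c.1 • ε) + norm1 (c.2 • δ) :=
        Nat.add_le_add_right (norm1_add_le _ _) _
    _ ≤ norm1 u + 4 := by rw [norm1_smul, norm1_smul, hε, hδ]; omega

lemma chain'_zip_tail {α : Type*} {R : α → α → Prop} :
    ∀ {l : List α}, l.Chain' R → ∀ q ∈ l.zip l.tail, R q.1 q.2
  | [], _, q, hq => by simp at hq
  | [_], _, q, hq => by simp at hq
  | a :: b :: t, h, q, hq => by
    simp only [List.Chain', List.isChain_cons_cons] at h
    simp only [List.tail_cons, List.zip_cons_cons, List.mem_cons] at hq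
    rcases hq with rfl | hq
    · exact h.1
    · exact chain'_zip_tail h.2 _ hq

lemma edgesOf_mem_EdgeSet {p : List (V d)} (hp : IsLatticePath p) {e : Sym2 (V d)}
    (he : e ∈ edgesOf p) : e ∈ EdgeSet d := by
  rw [edgesOf, List.mem_map] at he
  obtain ⟨q, hq, rfl⟩ := he
  exact Sym2.fromRel_prop.mpr (chain'_zip_tail hp q hq)

-- ### separation lemmas

lemma smul_unitVec_apply (s : ℤ) (i : Fin d) (b : Bool) (j : Fin d) :
    (s • unitVec d i b) j = if j = i then (if b then s else -s) else 0 := by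
  simp only [Pi.smul_apply, unitVec_apply, smul_eq_mul]
  split <;> cases b <;> simp [mul_comm]

lemma sep_lemma {j p q : Fin d} {bσ b1 b2 : Bool} (hpj : p ≠ j) (hqj : q ≠ j)
    {s t s' t' : ℤ}
    (h : s • unitVec d j bσ + t • unitVec d p b1 = s' • unitVec d j bσ + t' • unitVec d q b2) :
    s = s' ∧ t • unitVec d p b1 = t' • unitVec d q b2 := by
  have hj := congrFun h j
  simp only [Pi.add_apply, smul_unitVec_apply, if_pos rfl, if_neg (Ne.symm hpj),
    if_neg (Ne.symm hqj), add_zero] at hj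
  have hs : s = s' := by cases bσ <;> simp only [if_true, Bool.false_eq_true, if_false] at hj <;> omega
  subst hs
  exact ⟨rfl, by exact add_left_cancel h⟩

lemma natAbs_eq_of_smul_unitVec {p q : Fin d} {b1 b2 : Bool} {t t' : ℤ}
    (h : t • unitVec d p b1 = t' • unitVec d q b2) : t.natAbs = t'.natAbs := by
  by_cases hpq : p = q
  · subst hpq
    have := congrFun h p
    simp only [smul_unitVec_apply, if_pos rfl] at this
    cases b1 <;> cases b2 <;> simp only [if_true, Bool.false_eq_true, if_false] at this <;> omega
  · have h1 := congrFun h p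
    have h2 := congrFun h q
    simp only [smul_unitVec_apply, if_pos rfl, if_neg hpq, if_neg (Ne.symm hpq)] at h1 h2
    cases b1 <;> cases b2 <;> simp only [if_true, Bool.false_eq_true, if_false] at h1 h2 <;> omega

lemma unitVec_eq_of_smul {η η' : V d} {t : ℤ} (ht : t ≠ 0) (h : t • η = t • η') : η = η' :=
  smul_right_injective (V d) ht h


-- ### properties of the three offset paths

def OffOK (L : List (ℤ × ℤ)) : Prop :=
  (L.Chain' fun c c' =>
      (c.1 = c'.1 ∧ (c.2 - c'.2).natAbs = 1) ∨ (c.2 = c'.2 ∧ (c.1 - c'.1).natAbs = 1)) ∧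
    L.head? = some (0, 0) ∧ L.getLast? = some (1, 0) ∧ L.length ≤ 10 ∧
    ∀ c ∈ L, c.1.natAbs ≤ 2 ∧ c.2.natAbs ≤ 2

lemma offOK_direct : OffOK offDirect := by
  refine ⟨?_, rfl, rfl, by decide, by decide⟩
  simp only [offDirect, List.Chain', List.isChain_cons_cons, List.isChain_singleton, and_true]
  norm_num

lemma offOK_det : OffOK offDet := by
  refine ⟨?_, rfl, rfl, by decide, by decide⟩
  simp only [offDet, List.Chain', List.isChain_cons_cons, List.isChain_singleton, and_true]
  norm_num

lemma offOK_long : OffOK offLong := by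
  refine ⟨?_, rfl, rfl, by decide, by decide⟩
  simp only [offLong, List.Chain', List.isChain_cons_cons, List.isChain_singleton, and_true]
  norm_num

lemma edgesOf_length (p : List (V d)) : (edgesOf p).length = p.length - 1 := by
  simp only [edgesOf, List.length_map, List.length_zip, List.length_tail]
  omega

lemma opath_props {u ε δ : V d} (hε : norm1 ε = 1) (hδ : norm1 δ = 1) {L : List (ℤ × ℤ)}
    (hL : OffOK L) :
    IsLatticePath (opath u ε δ L) ∧ (opath u ε δ L).head? = some u ∧
      (opath u ε δ L).getLast? = some (u + ε) ∧ (edgesOf (opath u ε δ L)).length ≤ 9 ∧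
      ∀ w ∈ opath u ε δ L, norm1 w ≤ norm1 u + 4 := by
  obtain ⟨hchain, hhead, hlast, hlen, hbound⟩ := hL
  refine ⟨isLatticePath_opath hε hδ hchain, ?_, ?_, ?_, ?_⟩
  · rw [opath, List.head?_map, hhead, Option.map_some, mkv_zero]
  · rw [opath, List.getLast?_map, hlast, Option.map_some, mkv_onezero]
  · rw [edgesOf_length, opath, List.length_map]; omega
  · intro w hw
    rw [opath, List.mem_map] at hw
    obtain ⟨c, hc, rfl⟩ := hw
    exact norm1_mkv_le hε hδ (hbound c hc).1 (hbound c hc).2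


-- ### the local family of 2d edge-disjoint detour paths

lemma neg_unitVec (i : Fin d) (b : Bool) : -unitVec d i b = unitVec d i (!b) := by
  cases b <;> simp [unitVec] <;> module

lemma unitVec_cases (j : Fin d) (bσ : Bool) (i : Fin d) (b : Bool) :
    unitVec d i b = unitVec d j bσ ∨ unitVec d i b = -unitVec d j bσ ∨ i ≠ j := by
  by_cases hij : i = j
  · subst hij
    by_cases hb : b = bσ
    · subst hb; exact Or.inl rfl
    · refine Or.inr (Or.inl ?_)
      rw [neg_unitVec]
      have hb' : b = !bσ := by cases b <;> cases bσ <;> simp_all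
      rw [hb']
  · exact Or.inr (Or.inr hij)

lemma unitVec_ne_neg_self (i : Fin d) (b : Bool) : unitVec d i b ≠ -unitVec d i b := by
  intro h
  have hi := congrFun h i
  simp only [Pi.neg_apply, unitVec_apply, if_pos rfl] at hi
  cases b <;> simp at hi

def branch (ε δ0 η : V d) : List (ℤ × ℤ) × V d :=
  if η = ε then (offDirect, δ0) else if η = -ε then (offLong, δ0) else (offDet, η)

lemma edges_disjoint_auxA {u ε : V d} {j : Fin d} {bσ : Bool} (hε : ε = unitVec d j bσ)
    {δ δ' : V d} {q q' : Fin d} {b1 b2 : Bool} (hq : q ≠ j) (hq' : q' ≠ j)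
    (hδ : δ = unitVec d q b1) (hδ' : δ' = unitVec d q' b2)
    {L L' : List (ℤ × ℤ)} {e : Sym2 (V d)}
    (he : e ∈ edgesOf (opath u ε δ L)) (he' : e ∈ edgesOf (opath u ε δ' L'))
    (hmatch : ∀ c ∈ edgeSums L, ∀ c' ∈ edgeSums L',
        c.1 = c'.1 → c.2.natAbs ≠ c'.2.natAbs) : False := by
  obtain ⟨c, hc, h1⟩ := esum_mem_opath he
  obtain ⟨c', hc', h1'⟩ := esum_mem_opath he'
  have h2 : c.1 • ε + c.2 • δ = c'.1 • ε + c'.2 • δ' := by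
    have h3 := h1.symm.trans h1'
    rw [add_assoc, add_assoc] at h3
    exact add_left_cancel h3
  subst hε hδ hδ'
  obtain ⟨hs, ht⟩ := sep_lemma hq hq' h2
  exact hmatch c hc c' hc' hs (natAbs_eq_of_smul_unitVec ht)

lemma edges_disjoint_auxB {u ε : V d} {j : Fin d} {bσ : Bool} (hε : ε = unitVec d j bσ)
    {δ δ' : V d} {q q' : Fin d} {b1 b2 : Bool} (hq : q ≠ j) (hq' : q' ≠ j)
    (hδ : δ = unitVec d q b1) (hδ' : δ' = unitVec d q' b2)
    {L L' : List (ℤ × ℤ)} {e : Sym2 (V d)}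
    (he : e ∈ edgesOf (opath u ε δ L)) (he' : e ∈ edgesOf (opath u ε δ' L'))
    (hmatch : ∀ c ∈ edgeSums L, ∀ c' ∈ edgeSums L',
        c.1 = c'.1 → c.2.natAbs = c'.2.natAbs → c.2 = c'.2 ∧ c.2 ≠ 0) :
    δ = δ' := by
  obtain ⟨c, hc, h1⟩ := esum_mem_opath he
  obtain ⟨c', hc', h1'⟩ := esum_mem_opath he'
  have h2 : c.1 • ε + c.2 • δ = c'.1 • ε + c'.2 • δ' := by
    have h3 := h1.symm.trans h1'
    rw [add_assoc, add_assoc] at h3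
    exact add_left_cancel h3
  subst hε hδ hδ'
  obtain ⟨hs, ht⟩ := sep_lemma hq hq' h2
  obtain ⟨hceq, hc0⟩ := hmatch c hc c' hc' hs (natAbs_eq_of_smul_unitVec ht)
  rw [← hceq] at ht
  exact unitVec_eq_of_smul hc0 ht

lemma local_family (hd : 2 ≤ d) (u : V d) (j : Fin d) (bσ : Bool) :
    ∃ F : Fin d × Bool → List (V d),
      (∀ p, IsLatticePath (F p) ∧ (F p).head? = some u ∧
        (F p).getLast? = some (u + unitVec d j bσ) ∧ (edgesOf (F p)).length ≤ 9 ∧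
        (∀ w ∈ F p, norm1 w ≤ norm1 u + 4) ∧ ∀ e ∈ edgesOf (F p), e ∈ EdgeSet d) ∧
      ∀ p p', p ≠ p' → ∀ e ∈ edgesOf (F p), e ∉ edgesOf (F p') := by
  have : Nontrivial (Fin d) := Fin.nontrivial_iff_two_le.mpr hd
  obtain ⟨i0, hi0⟩ := exists_ne j
  set ε := unitVec d j bσ with hεdef
  set δ0 := unitVec d i0 true with hδ0def
  have hee : ε ≠ -ε := unitVec_ne_neg_self j bσ
  -- branch data for each η
  have hbranch : ∀ i b, OffOK (branch ε δ0 (unitVec d i b)).1 ∧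
      ∃ q b', q ≠ j ∧ (branch ε δ0 (unitVec d i b)).2 = unitVec d q b' := by
    intro i b
    rw [branch]
    split_ifs with h1 h2
    · exact ⟨offOK_direct, i0, true, hi0, rfl⟩
    · exact ⟨offOK_long, i0, true, hi0, rfl⟩
    · refine ⟨offOK_det, i, b, ?_, rfl⟩
      rcases unitVec_cases j bσ i b with h | h | h
      · exact absurd h h1
      · exact absurd h h2
      · exact h
  refine ⟨fun p => opath u ε (branch ε δ0 (unitVec d p.1 p.2)).2
      (branch ε δ0 (unitVec d p.1 p.2)).1, fun p => ?_, ?_⟩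
  · obtain ⟨hOK, q, b', hq, hD⟩ := hbranch p.1 p.2
    have hδ1 : norm1 (branch ε δ0 (unitVec d p.1 p.2)).2 = 1 := by rw [hD, norm1_unitVec]
    obtain ⟨hlat, hhead, hlast, hlen, hbound⟩ := opath_props (norm1_unitVec j bσ) hδ1 hOK
    exact ⟨hlat, hhead, hlast, hlen, hbound, fun e he => edgesOf_mem_EdgeSet hlat he⟩
  · rintro ⟨i, b⟩ ⟨i', b'⟩ hne e he he'
    dsimp only at he he'
    have hηη' : unitVec d i b ≠ unitVec d i' b' := fun h => hne (unitVec_injective h)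
    obtain ⟨hOK, q, b1, hq, hD⟩ := hbranch i b
    obtain ⟨hOK', q', b2, hq', hD'⟩ := hbranch i' b'
    -- case analysis on the two branches
    by_cases hc1 : unitVec d i b = ε <;> by_cases hc1' : unitVec d i' b' = ε
    · exact hηη' (hc1.trans hc1'.symm)
    · by_cases hc2' : unitVec d i' b' = -ε
      · -- direct vs long
        unfold branch at he hD; rw [if_pos hc1] at he hD; dsimp only at he hD
        unfold branch at he' hD'; rw [if_neg hc1', if_pos hc2'] at he' hD'; dsimp only at he' hD'
        exact edges_disjoint_auxA hεdef hq hq' hD hD' he he' (by decide)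
      · -- direct vs det
        unfold branch at he hD; rw [if_pos hc1] at he hD; dsimp only at he hD
        unfold branch at he' hD'; rw [if_neg hc1', if_neg hc2'] at he' hD'; dsimp only at he' hD'
        exact edges_disjoint_auxA hεdef hq hq' hD hD' he he' (by decide)
    · by_cases hc2 : unitVec d i b = -ε
      · -- long vs direct
        unfold branch at he hD; rw [if_neg hc1, if_pos hc2] at he hD; dsimp only at he hD
        unfold branch at he' hD'; rw [if_pos hc1'] at he' hD'; dsimp only at he' hD'
        exact edges_disjoint_auxA hεdef hq hq' hD hD' he he' (by decide)
      · -- det vs direct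
        unfold branch at he hD; rw [if_neg hc1, if_neg hc2] at he hD; dsimp only at he hD
        unfold branch at he' hD'; rw [if_pos hc1'] at he' hD'; dsimp only at he' hD'
        exact edges_disjoint_auxA hεdef hq hq' hD hD' he he' (by decide)
    · by_cases hc2 : unitVec d i b = -ε <;> by_cases hc2' : unitVec d i' b' = -ε
      · exact hηη' (hc2.trans hc2'.symm)
      · -- long vs det
        unfold branch at he hD; rw [if_neg hc1, if_pos hc2] at he hD; dsimp only at he hD
        unfold branch at he' hD'; rw [if_neg hc1', if_neg hc2'] at he' hD'; dsimp only at he' hD'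
        exact edges_disjoint_auxA hεdef hq hq' hD hD' he he' (by decide)
      · -- det vs long
        unfold branch at he hD; rw [if_neg hc1, if_neg hc2] at he hD; dsimp only at he hD
        unfold branch at he' hD'; rw [if_neg hc1', if_pos hc2'] at he' hD'; dsimp only at he' hD'
        exact edges_disjoint_auxA hεdef hq hq' hD hD' he he' (by decide)
      · -- det vs det
        unfold branch at he hD; rw [if_neg hc1, if_neg hc2] at he hD; dsimp only at he hD
        unfold branch at he' hD'; rw [if_neg hc1', if_neg hc2'] at he' hD'; dsimp only at he' hD'
        have := edges_disjoint_auxB hεdef hq hq' hD hD' he he' (by decide)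
        exact hηη' this


-- ### skeleton path from 0 to z

lemma skeleton : ∀ (n : ℕ) (z : V d), norm1 z = n →
    ∃ v : ℕ → V d, v 0 = 0 ∧ v n = z ∧ (∀ k, norm1 (v k) ≤ n) ∧
      ∀ k < n, ∃ j b, v (k + 1) = v k + unitVec d j b := by
  intro n
  induction n with
  | zero =>
    intro z hz
    exact ⟨fun _ => 0, rfl, (norm1_eq_zero.mp hz).symm, fun k => by simp [norm1], by omega⟩
  | succ n ih =>
    intro z hz
    have hzne : z ≠ 0 := by
      intro h; rw [h] at hz; simp [norm1] at hz
    have hex : ∃ j, z j ≠ 0 := by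
      by_contra hc
      push_neg at hc
      exact hzne (funext fun i => hc i)
    obtain ⟨j, hj⟩ := hex
    set b : Bool := decide (0 < z j) with hbdef
    set z' : V d := z - unitVec d j b with hz'def
    have hval : ∀ i, z' i = z i - (if i = j then (if b then 1 else -1) else 0) := by
      intro i
      simp only [hz'def, Pi.sub_apply, unitVec_apply]
    have hz'j : (z' j).natAbs + 1 = (z j).natAbs := by
      have h1 := hval j
      rw [if_pos rfl] at h1
      have hb : b = true ↔ 0 < z j := by rw [hbdef]; simp
      rcases Bool.eq_false_or_eq_true b with h | h <;> rw [h] at h1 <;> simp at h1 <;>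
        rw [h] at hb <;> simp at hb <;> omega
    have hz'i : ∀ i, i ≠ j → z' i = z i := by
      intro i hij
      rw [hval i, if_neg hij, sub_zero]
    have hnz' : norm1 z' = n := by
      have e1 : norm1 z' = ∑ i ∈ Finset.univ.erase j, (z' i).natAbs + (z' j).natAbs := by
        rw [norm1, Finset.sum_erase_add _ _ (Finset.mem_univ j)]
      have e2 : norm1 z = ∑ i ∈ Finset.univ.erase j, (z i).natAbs + (z j).natAbs := by
        rw [norm1, Finset.sum_erase_add _ _ (Finset.mem_univ j)]
      have e3 : ∑ i ∈ Finset.univ.erase j, (z' i).natAbs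
          = ∑ i ∈ Finset.univ.erase j, (z i).natAbs :=
        Finset.sum_congr rfl fun i hi => by rw [hz'i i (Finset.ne_of_mem_erase hi)]
      omega
    obtain ⟨v', h0, hn, hbound, hstep⟩ := ih z' hnz'
    refine ⟨fun k => if k = n + 1 then z else v' k, by simp [h0], by simp, ?_, ?_⟩
    · intro k
      by_cases hk : k = n + 1
      · simp [hk, hz]
      · simp only [if_neg hk]
        exact le_trans (hbound k) (Nat.le_succ n)
    · intro k hk
      by_cases hkn : k = n
      · refine ⟨j, b, ?_⟩
        show (if k + 1 = n + 1 then z else v' (k + 1))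
            = (if k = n + 1 then z else v' k) + unitVec d j b
        rw [if_pos (by omega), if_neg (by omega), hkn, hn, hz'def]
        abel
      · have hk1 : k + 1 ≠ n + 1 := by omega
        have hkne : k ≠ n + 1 := by omega
        simp only [if_neg hk1, if_neg hkne]
        exact hstep k (by omega)

-- ### concatenation of paths

lemma edgesOf_cons_cons (x y : V d) (l : List (V d)) :
    edgesOf (x :: y :: l) = s(x, y) :: edgesOf (y :: l) := rfl

lemma edgesOf_append {a : V d} : ∀ {p : List (V d)} (q : List (V d)),
    p.getLast? = some a → q.head? = some a →
    edgesOf (p ++ q.tail) = edgesOf p ++ edgesOf q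
  | [], q, h, _ => by simp at h
  | [x], q, h, h2 => by
    simp only [List.getLast?_singleton, Option.some_inj] at h
    subst h
    cases q with
    | nil => simp at h2
    | cons a' t =>
      simp only [List.head?_cons, Option.some_inj] at h2
      subst h2
      simp [edgesOf]
  | x :: y :: p', q, h, h2 => by
    have hl : (y :: p').getLast? = some a := by
      rw [← List.getLast?_cons_cons (a := x)]; exact h
    have ih := edgesOf_append q hl h2
    have e1 : (x :: y :: p') ++ q.tail = x :: ((y :: p') ++ q.tail) := rfl
    have e2 : (y :: p') ++ q.tail = y :: (p' ++ q.tail) := rfl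
    rw [e1, e2, edgesOf_cons_cons, edgesOf_cons_cons, List.cons_append, ← e2, ih]

lemma isLatticePath_append {a : V d} {p q : List (V d)} (hp : IsLatticePath p)
    (hq : IsLatticePath q) (h : p.getLast? = some a) (h2 : q.head? = some a) :
    IsLatticePath (p ++ q.tail) := by
  apply List.IsChain.append hp (List.IsChain.tail hq)
  intro x hx y hy
  rw [h, Option.mem_some_iff] at hx
  subst hx
  cases q with
  | nil => simp at h2
  | cons a' t =>
    simp only [List.head?_cons, Option.some_inj] at h2
    subst h2
    cases t with
    | nil => simp at hy
    | cons b' t' =>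
      simp only [List.tail_cons, List.head?_cons, Option.mem_some_iff] at hy
      subst hy
      exact (List.isChain_cons_cons.mp hq).1

lemma getLast?_append_tail {a : V d} {p q : List (V d)} (h : p.getLast? = some a)
    (h2 : q.head? = some a) : (p ++ q.tail).getLast? = q.getLast? := by
  cases q with
  | nil => simp at h2
  | cons a' t =>
    simp only [List.head?_cons, Option.some_inj] at h2
    subst h2
    cases t with
    | nil => simpa using h
    | cons b' t' =>
      rw [List.tail_cons, List.getLast?_append, List.getLast?_cons_cons]
      cases hgl : (b' :: t').getLast? with
      | none => simp at hgl
      | some w => simp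

lemma head?_append_tail {p q : List (V d)} (hp : p ≠ []) :
    (p ++ q.tail).head? = p.head? := by
  cases p with
  | nil => exact absurd rfl hp
  | cons x t => simp

lemma mem_append_tail {w : V d} {p q : List (V d)} (hw : w ∈ p ++ q.tail) :
    w ∈ p ∨ w ∈ q := by
  rcases List.mem_append.mp hw with h | h
  · exact Or.inl h
  · exact Or.inr (List.mem_of_mem_tail h)


-- ### cylinder membership

lemma norm_toE_le (w : V d) : ‖toE w‖ ≤ (norm1 w : ℝ) := by
  rw [EuclideanSpace.norm_eq]
  have h1 : ∀ i, ‖(toE w) i‖ ^ 2 ≤ ‖(toE w) i‖ * ∑ i', ‖(toE w) i'‖ := by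
    intro i
    rw [sq]
    apply mul_le_mul_of_nonneg_left _ (norm_nonneg _)
    exact Finset.single_le_sum (fun i' _ => norm_nonneg ((toE w) i')) (Finset.mem_univ i)
  have h2 : ∑ i, ‖(toE w) i‖ ^ 2 ≤ (∑ i, ‖(toE w) i‖) ^ 2 := by
    rw [sq]
    refine le_trans (Finset.sum_le_sum fun i _ => h1 i) (le_of_eq ?_)
    rw [← Finset.sum_mul]
  have h3 : Real.sqrt (∑ i, ‖(toE w) i‖ ^ 2) ≤ ∑ i, ‖(toE w) i‖ := by
    rw [show (∑ i, ‖(toE w) i‖) = Real.sqrt ((∑ i, ‖(toE w) i‖) ^ 2) from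
      (Real.sqrt_sq (Finset.sum_nonneg fun i _ => norm_nonneg _)).symm]
    exact Real.sqrt_le_sqrt h2
  refine le_trans h3 (le_of_eq ?_)
  rw [norm1, Nat.cast_sum]
  refine Finset.sum_congr rfl fun i _ => ?_
  rw [Nat.cast_natAbs]
  simp [toE]

lemma mem_cyl_of_norm1_le {z w : V d} {r : ℝ} (h : (norm1 w : ℝ) ≤ r) : w ∈ cyl z r := by
  rw [cyl, Set.mem_setOf_eq]
  refine le_trans (le_trans (Metric.infDist_le_dist_of_mem ⟨0, rfl⟩) ?_) (le_trans (norm_toE_le w) h)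
  show dist (toE w) ((0 : ℝ) • toE z) ≤ ‖toE w‖
  rw [zero_smul, dist_zero_right]

-- ### |sInf upper bound for Tres

lemma Tres_le {τ : Sym2 (V d) → Ω → ℝ} {ω : Ω} {S A B : Set (V d)}
    (hτ0 : ∀ e ω, 0 ≤ τ e ω) {p : List (V d)} (hp : IsLatticePath p)
    (hS : ∀ v ∈ p, v ∈ S) (hA : ∃ a ∈ A, p.head? = some a)
    (hB : ∃ b ∈ B, p.getLast? = some b) :
    Tres τ ω S A B ≤ pathWeight τ ω p := by
  apply csInf_le
  · refine ⟨0, fun c hc => ?_⟩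
    obtain ⟨p', _, _, _, _, hw⟩ := hc
    rw [← hw, pathWeight_eq]
    exact List.sum_nonneg fun y hy => by
      obtain ⟨e, _, rfl⟩ := List.mem_map.mp hy
      exact hτ0 e ω
  · exact ⟨p, hp, hS, hA, hB, rfl⟩

lemma pathWeight_le {τ : Sym2 (V d) → Ω → ℝ} {ω : Ω} {p : List (V d)} {x : ℝ}
    (hx : 0 ≤ x) (hlen : (edgesOf p).length ≤ 9) (h : ∀ e ∈ edgesOf p, τ e ω ≤ x) :
    pathWeight τ ω p ≤ 9 * x := by
  rw [pathWeight_eq]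
  calc ((edgesOf p).map fun e => τ e ω).sum
      ≤ ((edgesOf p).map fun e => τ e ω).length • x := by
        apply List.sum_le_card_nsmul
        intro y hy
        obtain ⟨e, he, rfl⟩ := List.mem_map.mp hy
        exact h e he
    _ = ((edgesOf p).length : ℝ) * x := by rw [List.length_map, nsmul_eq_mul]
    _ ≤ 9 * x := by
        apply mul_le_mul_of_nonneg_right _ hx
        exact_mod_cast hlen

-- ### Ymin characterization

lemma Ymin_set_eq (τ : Sym2 (V d) → Ω → ℝ) (ω : Ω) :
    {x | ∃ i : Fin d, x = τ s(0, stdBasis d i) ω ∨ x = τ s(0, -stdBasis d i) ω} =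
      Set.range fun p : Fin d × Bool => τ s(0, unitVec d p.1 p.2) ω := by
  ext y
  constructor
  · rintro ⟨i, h | h⟩
    · exact ⟨(i, true), by rw [h]; congr 2; simp [unitVec]⟩
    · exact ⟨(i, false), by rw [h]; congr 2; simp [unitVec]⟩
  · rintro ⟨⟨i, b⟩, rfl⟩
    refine ⟨i, ?_⟩
    cases b
    · right; congr 2; simp [unitVec]
    · left; congr 2; simp [unitVec]

lemma lt_Ymin_of_forall [Nonempty (Fin d)] {τ : Sym2 (V d) → Ω → ℝ} {ω : Ω} {x : ℝ}
    (h : ∀ p : Fin d × Bool, x < τ s(0, unitVec d p.1 p.2) ω) : x < Ymin τ ω := by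
  rw [Ymin, Ymin_set_eq]
  have hfin : (Set.range fun p : Fin d × Bool => τ s(0, unitVec d p.1 p.2) ω).Finite :=
    Set.finite_range _
  have hne : (Set.range fun p : Fin d × Bool => τ s(0, unitVec d p.1 p.2) ω).Nonempty :=
    Set.range_nonempty _
  obtain ⟨p, hp⟩ := hne.csInf_mem hfin
  rw [← hp]
  exact h p


-- ### probability lemmas

section Prob
variable {d : ℕ} {Ω : Type*} [MeasurableSpace Ω] {P : Measure Ω}

lemma pathWeight_append {τ : Sym2 (V d) → Ω → ℝ} {ω : Ω} {a : V d} {p q : List (V d)}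
    (h : p.getLast? = some a) (h2 : q.head? = some a) :
    pathWeight τ ω (p ++ q.tail) = pathWeight τ ω p + pathWeight τ ω q := by
  rw [pathWeight_eq, pathWeight_eq, pathWeight_eq, edgesOf_append q h h2,
    List.map_append, List.sum_append]

lemma meas_iInter_edges {τ : Sym2 (V d) → Ω → ℝ} (hτ : IID τ P) {x : ℝ}
    {ι : Type*} [Fintype ι] (g : ι → Sym2 (V d)) (hg : ∀ i, g i ∈ EdgeSet d)
    (hinj : Function.Injective g) :
    P (⋂ i, {ω | x < τ (g i) ω}) = ∏ i, P {ω | x < τ (g i) ω} := by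
  classical
  set g' : ι → EdgeSet d := fun i => ⟨g i, hg i⟩ with hg'
  have hinj' : Function.Injective g' := fun a b h => hinj (congrArg Subtype.val h)
  set S : Finset (EdgeSet d) := Finset.univ.image g' with hS
  have key := (hτ.2.2.1).measure_inter_preimage_eq_mul S (sets := fun _ => Set.Ioi x)
      (fun i _ => measurableSet_Ioi)
  have h1 : (⋂ e ∈ S, (fun ω => τ e.1 ω) ⁻¹' Set.Ioi x) = ⋂ i, {ω | x < τ (g i) ω} := by
    ext ω
    simp only [Set.mem_iInter, Set.mem_preimage, Set.mem_Ioi, hS, Finset.mem_image,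
      Finset.mem_univ, true_and, Set.mem_setOf_eq]
    constructor
    · intro h i; exact h (g' i) ⟨i, rfl⟩
    · rintro h e ⟨i, rfl⟩; exact h i
  have h2 : ∏ e ∈ S, P ((fun ω => τ e.1 ω) ⁻¹' Set.Ioi x) = ∏ i, P {ω | x < τ (g i) ω} := by
    rw [hS, Finset.prod_image (fun a _ b _ h => hinj' h)]
    rfl
  rw [h1] at key
  rw [key, h2]

lemma meas_edge_eq {τ : Sym2 (V d) → Ω → ℝ} (hτ : IID τ P) {x : ℝ}
    {e e' : Sym2 (V d)} (he : e ∈ EdgeSet d) (he' : e' ∈ EdgeSet d) :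
    P {ω | x < τ e ω} = P {ω | x < τ e' ω} :=
  (hτ.2.2.2 ⟨e, he⟩ ⟨e', he'⟩).measure_mem_eq measurableSet_Ioi

lemma edge_mem_EdgeSet {a w : V d} (h : norm1 w = 1) : s(a, a + w) ∈ EdgeSet d := by
  apply Sym2.fromRel_prop.mpr
  rw [dist1_eq_norm1]
  rw [show a - (a + w) = -w by abel, norm1_neg, h]

end Prob

end FPP


open FPP in
/-- **Lemma (tail comparison in cylinders).** For `z ≠ 0` and `r` large enough,
`P(T_{C(z,r)}(0,z) > 9‖z‖x) ≤ 9^{2d} ‖z‖ P(Y > x)` for every `x ≥ 0`. -/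
theorem fpp_cylinder_tail {d : ℕ} (hd : 2 ≤ d) {Ω : Type*} [MeasurableSpace Ω]
    (P : Measure Ω) [IsProbabilityMeasure P]
    (τ : Sym2 (V d) → Ω → ℝ) (hτ : IID τ P)
    (z : V d) (hz : z ≠ 0) :
    ∃ R : ℝ, ∀ r : ℝ, R ≤ r → ∀ x : ℝ, 0 ≤ x →
      P {ω | 9 * (norm1 z : ℝ) * x < Tres τ ω (cyl z r) {0} {z}} ≤
        (9 : ℝ≥0∞) ^ (2 * d) * (norm1 z : ℝ≥0∞) * P {ω | x < Ymin τ ω} := by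
  classical
  have hd0 : 0 < d := by omega
  have hnonempty : Nonempty (Fin d) := ⟨⟨0, hd0⟩⟩
  set m := norm1 z with hmdef
  obtain ⟨v, hv0, hvm, hvbound, hvstep⟩ := skeleton m z rfl
  choose! jf bf hstep using hvstep
  have hloc := fun k => local_family (d := d) hd (v k) (jf k) (bf k)
  choose F hFprops hFdisj using hloc
  refine ⟨(m : ℝ) + 4, fun r hr x hx => ?_⟩
  -- the reference edge and its tail probability
  have he₀aux := edge_mem_EdgeSet (a := (0 : V d)) (norm1_unitVec ⟨0, hd0⟩ true)
  rw [zero_add] at he₀aux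
  set e₀ : Sym2 (V d) := s(0, unitVec d ⟨0, hd0⟩ true) with he₀def
  set qe : ℝ≥0∞ := P {ω | x < τ e₀ ω} with hqe
  -- the per-section events
  set A : ℕ → Set Ω := fun k =>
    {ω | ∀ p : Fin d × Bool, ∃ e ∈ edgesOf (F k p), x < τ e ω} with hA
  -- Step 1 : event inclusion
  have hincl : {ω | 9 * (m : ℝ) * x < Tres τ ω (cyl z r) {0} {z}} ⊆
      ⋃ k ∈ Finset.range m, A k := by
    intro ω hω
    by_contra hnot
    simp only [Set.mem_iUnion, exists_prop, not_exists, not_and] at hnot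
    have hsel : ∀ k, k < m → ∃ p : Fin d × Bool, ∀ e ∈ edgesOf (F k p), τ e ω ≤ x := by
      intro k hk
      have h1 : ω ∉ A k := hnot k (Finset.mem_range.mpr hk)
      rw [hA] at h1
      simp only [Set.mem_setOf_eq, not_forall] at h1
      obtain ⟨p, hp⟩ := h1
      refine ⟨p, fun e he => ?_⟩
      by_contra hgt
      push_neg at hgt
      exact hp ⟨e, he, hgt⟩
    have hbuild : ∀ k, k ≤ m → ∃ pth : List (V d), IsLatticePath pth ∧
        pth.head? = some 0 ∧ pth.getLast? = some (v k) ∧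
        (∀ w ∈ pth, norm1 w ≤ m + 4) ∧ pathWeight τ ω pth ≤ 9 * (k : ℝ) * x := by
      intro k
      induction k with
      | zero =>
        intro _
        refine ⟨[0], List.isChain_singleton _, rfl, by rw [hv0]; simp, ?_, ?_⟩
        · intro w hw
          simp only [List.mem_singleton] at hw
          subst hw
          simp [norm1]
        · have h0 : pathWeight τ ω ([0] : List (V d)) = 0 := rfl
          rw [h0]
          norm_num
      | succ k ih =>
        intro hk
        obtain ⟨pth, hlat, hhead, hlast, hmem, hwt⟩ := ih (by omega)
        obtain ⟨p0, hp0⟩ := hsel k (by omega)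
        obtain ⟨hlatq, hheadq, hlastq, hlenq, hmemq, _⟩ := hFprops k p0
        have hheadq' : (F k p0).head? = some (v k) := hheadq
        have hlastq' : (F k p0).getLast? = some (v (k + 1)) := by
          rw [hlastq, hstep k (by omega)]
        have hpne : pth ≠ [] := by
          intro h; rw [h] at hhead; simp at hhead
        refine ⟨pth ++ (F k p0).tail, isLatticePath_append hlat hlatq hlast hheadq', ?_, ?_, ?_, ?_⟩
        · rw [head?_append_tail hpne, hhead]
        · rw [getLast?_append_tail hlast hheadq', hlastq']
        · intro w hw
          rcases mem_append_tail hw with h | h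
          · exact hmem w h
          · have h1 := hmemq w h
            have h2 := hvbound k
            omega
        · rw [pathWeight_append hlast hheadq']
          have hq9 : pathWeight τ ω (F k p0) ≤ 9 * x := pathWeight_le hx hlenq hp0
          push_cast
          nlinarith [hwt, hq9]
    obtain ⟨pth, hlat, hhead, hlast, hmem, hwt⟩ := hbuild m le_rfl
    have hcyl : ∀ w ∈ pth, w ∈ cyl z r := by
      intro w hw
      apply mem_cyl_of_norm1_le
      have h1 := hmem w hw
      have h2 : (norm1 w : ℝ) ≤ (m : ℝ) + 4 := by exact_mod_cast h1
      linarith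
    have hTle : Tres τ ω (cyl z r) {0} {z} ≤ pathWeight τ ω pth :=
      Tres_le hτ.2.1 hlat hcyl ⟨0, rfl, hhead⟩ ⟨z, rfl, by rw [hlast, hvm]⟩
    rw [Set.mem_setOf_eq] at hω
    rw [hlast] at *
    linarith
  -- Step 2 : probability of each section event
  have hAk : ∀ k, P (A k) ≤ 9 ^ (2 * d) * qe ^ (2 * d) := by
    intro k
    set Es : (Fin d × Bool) → Finset (Sym2 (V d)) := fun p => (edgesOf (F k p)).toFinset
      with hEs
    have hsub : A k ⊆ ⋃ f ∈ Fintype.piFinset Es,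
        ⋂ p : Fin d × Bool, {ω | x < τ (f p) ω} := by
      intro ω hω
      rw [hA, Set.mem_setOf_eq] at hω
      choose g hg1 hg2 using hω
      exact Set.mem_iUnion₂.mpr ⟨g, Fintype.mem_piFinset.mpr
        (fun p => List.mem_toFinset.mpr (hg1 p)), Set.mem_iInter.mpr hg2⟩
    refine le_trans (measure_mono hsub) (le_trans (measure_biUnion_finset_le _ _) ?_)
    have hterm : ∀ f ∈ Fintype.piFinset Es,
        P (⋂ p, {ω | x < τ (f p) ω}) = qe ^ (2 * d) := by
      intro f hf
      have hmemf : ∀ p, f p ∈ edgesOf (F k p) :=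
        fun p => List.mem_toFinset.mp (Fintype.mem_piFinset.mp hf p)
      have hEdge : ∀ p, f p ∈ EdgeSet d :=
        fun p => (hFprops k p).2.2.2.2.2 (f p) (hmemf p)
      have hinj : Function.Injective f := by
        intro p p' hpp'
        by_contra hne'
        exact hFdisj k p p' hne' (f p) (hmemf p) (hpp' ▸ hmemf p')
      rw [meas_iInter_edges hτ f hEdge hinj]
      rw [Finset.prod_congr rfl (fun p _ => meas_edge_eq hτ (hEdge p) he₀aux),
        Finset.prod_const]
      congr 1
      simp [Finset.card_univ, Fintype.card_prod, mul_comm]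
    calc ∑ f ∈ Fintype.piFinset Es, P (⋂ p, {ω | x < τ (f p) ω})
        = ∑ _f ∈ Fintype.piFinset Es, qe ^ (2 * d) := Finset.sum_congr rfl hterm
      _ = (Fintype.piFinset Es).card • qe ^ (2 * d) := Finset.sum_const _
      _ ≤ 9 ^ (2 * d) * qe ^ (2 * d) := by
          rw [nsmul_eq_mul]
          refine mul_le_mul_left ?_ _
          have hcard : (Fintype.piFinset Es).card ≤ 9 ^ (2 * d) := by
            rw [Fintype.card_piFinset]
            calc ∏ p, (Es p).card
                ≤ ∏ _p : Fin d × Bool, 9 :=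
                  Finset.prod_le_prod' (fun p _ =>
                    le_trans (List.toFinset_card_le _) ((hFprops k p).2.2.2.1))
              _ = 9 ^ (2 * d) := by
                  rw [Finset.prod_const]
                  congr 1
                  simp [Finset.card_univ, Fintype.card_prod, mul_comm]
          calc ((Fintype.piFinset Es).card : ℝ≥0∞)
              ≤ ((9 ^ (2 * d) : ℕ) : ℝ≥0∞) := by exact_mod_cast hcard
            _ = 9 ^ (2 * d) := by push_cast; rfl
  -- Step 3 : lower bound for the Ymin tail
  have hY : qe ^ (2 * d) ≤ P {ω | x < Ymin τ ω} := by
    have hsub : (⋂ p : Fin d × Bool, {ω | x < τ (s(0, unitVec d p.1 p.2)) ω}) ⊆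
        {ω | x < Ymin τ ω} :=
      fun ω hω => lt_Ymin_of_forall (fun p => Set.mem_iInter.mp hω p)
    have hEdge : ∀ p : Fin d × Bool, s((0 : V d), unitVec d p.1 p.2) ∈ EdgeSet d := by
      intro p
      have := edge_mem_EdgeSet (a := (0 : V d)) (norm1_unitVec p.1 p.2)
      rwa [zero_add] at this
    have hinj : Function.Injective
        (fun p : Fin d × Bool => s((0 : V d), unitVec d p.1 p.2)) := by
      intro p p' h
      apply unitVec_injective
      have h2 := congrArg esum h
      simpa using h2
    have hP : P (⋂ p : Fin d × Bool, {ω | x < τ (s(0, unitVec d p.1 p.2)) ω})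
        = qe ^ (2 * d) := by
      rw [meas_iInter_edges hτ _ hEdge hinj]
      rw [Finset.prod_congr rfl (fun p _ => meas_edge_eq hτ (hEdge p) he₀aux),
        Finset.prod_const]
      congr 1
      simp [Finset.card_univ, Fintype.card_prod, mul_comm]
    exact le_trans (le_of_eq hP.symm) (measure_mono hsub)
  -- Step 4 : combine
  calc P {ω | 9 * (m : ℝ) * x < Tres τ ω (cyl z r) {0} {z}}
      ≤ P (⋃ k ∈ Finset.range m, A k) := measure_mono hincl
    _ ≤ ∑ k ∈ Finset.range m, P (A k) := measure_biUnion_finset_le _ _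
    _ ≤ ∑ _k ∈ Finset.range m, 9 ^ (2 * d) * qe ^ (2 * d) :=
        Finset.sum_le_sum (fun k _ => hAk k)
    _ = m • (9 ^ (2 * d) * qe ^ (2 * d)) := by
        rw [Finset.sum_const, Finset.card_range]
    _ = 9 ^ (2 * d) * (m : ℝ≥0∞) * qe ^ (2 * d) := by
        rw [nsmul_eq_mul]; ring
    _ ≤ 9 ^ (2 * d) * (m : ℝ≥0∞) * P {ω | x < Ymin τ ω} := mul_le_mul_right hY _
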